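/- arXiv:0801.3166 — 5 statements merged into one kernel-verified Lean document; each statement's English description precedes it below -/
import Mathlib

section
/- Let A be a principal ideal domain, p a nonzero irreducible element of A, and N > r positive integers. Let M = (A/p^N)^d and let M' be a submodule of M containing p^r M. Then there exists a basis (e_1, ..., e_d) of M over A/p^N and integers 0 ≤ n_1 ≤ n_2 ≤ ... ≤ n_d ≤ r such that M' is the submodule generated by the elements p^{n_i} e_i. -/
section Aux

variable {A : Type*} [CommRing A] [IsDomain A] [IsPrincipalIdealRing A]

/-- Image of a basis under reduction mod an ideal is a basis of the quotient module. -/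
noncomputable def quotPiBasis (I : Ideal A) (d : ℕ)
    (b : Module.Basis (Fin d) A (Fin d → A)) :
    {e : Module.Basis (Fin d) (A ⧸ I) (Fin d → A ⧸ I) //
      ∀ j, e j = fun i => Ideal.Quotient.mk I (b j i)} := by
  classical
  set R := A ⧸ I
  -- componentwise reduction, as an A-linear map
  set φ : (Fin d → A) →ₗ[A] (Fin d → R) :=
    LinearMap.pi fun i => (Algebra.linearMap A R).comp (LinearMap.proj i) with hφ
  have hφ_apply : ∀ x i, φ x i = Ideal.Quotient.mk I (x i) := fun x i => rfl
  set v : Fin d → (Fin d → R) := fun j => φ (b j) with hv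
  have hφsurj : Function.Surjective φ := by
    intro y
    refine ⟨fun i => (Ideal.Quotient.mk_surjective (y i)).choose, funext fun i => ?_⟩
    exact (Ideal.Quotient.mk_surjective (y i)).choose_spec
  have hspanA : Submodule.span A (Set.range v) = ⊤ := by
    have : Submodule.map φ (Submodule.span A (Set.range b)) = ⊤ := by
      rw [b.span_eq, Submodule.map_top, LinearMap.range_eq_top.mpr hφsurj]
    rw [Submodule.map_span, ← Set.range_comp] at this
    exact this
  have hspanR : Submodule.span R (Set.range v) = ⊤ := by
    rw [eq_top_iff]
    intro x _
    have hx : x ∈ Submodule.span A (Set.range v) := by rw [hspanA]; trivial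
    exact Submodule.span_le_restrictScalars A R _ hx
  set h : (Fin d → R) →ₗ[R] (Fin d → R) := (Pi.basisFun R (Fin d)).constr R v with hh
  have hhsurj : Function.Surjective h := by
    rw [← LinearMap.range_eq_top, Module.Basis.constr_range, hspanR]
  have hhinj : Function.Injective h :=
    OrzechProperty.injective_of_surjective_endomorphism h hhsurj
  refine ⟨(Pi.basisFun R (Fin d)).map (LinearEquiv.ofBijective h ⟨hhinj, hhsurj⟩),
    fun j => ?_⟩
  simp only [Module.Basis.map_apply, LinearEquiv.ofBijective_apply, hh, Module.Basis.constr_basis]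
  rfl

end Aux

theorem key_lemma (A : Type*) [CommRing A] [IsDomain A] [IsPrincipalIdealRing A]
    (p : A) (hp : Irreducible p) (hp0 : p ≠ 0)
    (r d : ℕ) (I : Ideal A)
    (M' : Submodule (A ⧸ I) (Fin d → A ⧸ I))
    (hM' : ∀ m : Fin d → A ⧸ I,
      (Ideal.Quotient.mk I (p ^ r)) • m ∈ M') :
    ∃ (e : Module.Basis (Fin d) (A ⧸ I) (Fin d → A ⧸ I))
      (n : Fin d → ℕ), Monotone n ∧ (∀ i, n i ≤ r) ∧
      M' = Submodule.span (A ⧸ I)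
        (Set.range fun i => (Ideal.Quotient.mk I (p ^ n i)) • e i) := by
  classical
  set R := A ⧸ I
  set φ : (Fin d → A) →ₗ[A] (Fin d → R) :=
    LinearMap.pi fun i => (Algebra.linearMap A R).comp (LinearMap.proj i) with hφ
  have hφsurj : Function.Surjective φ := by
    intro y
    refine ⟨fun i => (Ideal.Quotient.mk_surjective (y i)).choose, funext fun i => ?_⟩
    exact (Ideal.Quotient.mk_surjective (y i)).choose_spec
  have hφsmul : ∀ (a : A) (y : Fin d → R), a • y = (Ideal.Quotient.mk I a) • y := by
    intro a y
    rw [← algebraMap_smul R a y]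
    rfl
  set L : Submodule A (Fin d → A) := (M'.restrictScalars A).comap φ with hL
  have hmemL : ∀ x : Fin d → A, p ^ r • x ∈ L := by
    intro x
    simp only [hL, Submodule.mem_comap, map_smul, Submodule.restrictScalars_mem]
    rw [hφsmul]
    exact hM' (φ x)
  obtain ⟨n, snf⟩ := L.smithNormalForm (Pi.basisFun A (Fin d))
  -- n = d
  have hnd : n = d := by
    have h1 : n ≤ d := by simpa using Fintype.card_le_of_embedding snf.f
    have h2 : d ≤ n := by
      have hfin : Module.Finite A L := Module.Finite.of_basis snf.bN
      have hrank : Module.finrank A L = n := by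
        rw [Module.finrank_eq_card_basis snf.bN, Fintype.card_fin]
      set g : (Fin d → A) →ₗ[A] (Fin d → A) := (p ^ r) • LinearMap.id with hg
      have hgker : LinearMap.ker g = ⊥ := by
        rw [LinearMap.ker_eq_bot']
        intro x hx
        funext i
        have : p ^ r * x i = 0 := congrFun hx i
        rcases mul_eq_zero.mp this with h | h
        · exact absurd h (pow_ne_zero _ hp0)
        · exact h
      have hli : LinearIndependent A fun i : Fin d =>
          (⟨p ^ r • Pi.basisFun A (Fin d) i, hmemL _⟩ : L) := by
        apply LinearIndependent.of_comp L.subtype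
        have := ((Pi.basisFun A (Fin d)).linearIndependent).map' g hgker
        exact this
      have := hli.fintype_card_le_finrank
      rwa [Fintype.card_fin, hrank] at this
    omega
  subst hnd
  set σ : Fin n ≃ Fin n := Equiv.ofBijective snf.f
    ((Fintype.bijective_iff_injective_and_card snf.f).mpr ⟨snf.f.injective, rfl⟩) with hσ
  -- each a i divides p ^ r
  have hdvd : ∀ i, snf.a i ∣ p ^ r := by
    intro i
    set m : L := ⟨p ^ r • snf.bM (snf.f i), hmemL _⟩ with hm
    have := snf.repr_apply_embedding_eq_repr_smul (m := m) (i := i)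
    rw [show ((m : Fin n → A)) = p ^ r • snf.bM (snf.f i) from rfl] at this
    simp only [map_smul, Finsupp.smul_apply, Module.Basis.repr_self,
      Finsupp.single_apply, if_pos rfl, if_true, smul_eq_mul, mul_one] at this
    exact ⟨snf.bN.repr m i, this⟩
  have hpprime : Prime p := hp.prime
  have hassoc : ∀ i, ∃ k ≤ r, ∃ u : Aˣ, snf.a i * u = p ^ k := by
    intro i
    obtain ⟨k, hk, u, hu⟩ := (dvd_prime_pow hpprime r).mp (hdvd i)
    exact ⟨k, hk, u, hu⟩
  choose k hk u hu using hassoc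
  -- L as a span
  have hLspan0 : L = Submodule.span A (Set.range fun i => snf.a i • snf.bM (snf.f i)) := by
    conv_lhs => rw [← Submodule.map_subtype_top L, ← snf.bN.span_eq]
    rw [Submodule.map_span, ← Set.range_comp]
    exact congrArg (Submodule.span A) (congrArg Set.range (funext fun i => snf.snf i))
  have hspankk : Submodule.span A (Set.range fun i => snf.a i • snf.bM (snf.f i)) =
      Submodule.span A (Set.range fun i => p ^ k i • snf.bM (snf.f i)) := by
    apply le_antisymm <;> rw [Submodule.span_le] <;> rintro x ⟨i, rfl⟩ <;> dsimp only
    · have : snf.a i • snf.bM (snf.f i) =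
          (↑(u i)⁻¹ : A) • (p ^ k i • snf.bM (snf.f i)) := by
        rw [smul_smul, ← hu i]
        rw [mul_comm (snf.a i) (u i : A), ← mul_assoc, Units.inv_mul, one_mul]
      rw [this]
      exact Submodule.smul_mem _ _ (Submodule.subset_span ⟨i, rfl⟩)
    · have : p ^ k i • snf.bM (snf.f i) =
          (↑(u i) : A) • (snf.a i • snf.bM (snf.f i)) := by
        rw [smul_smul, ← hu i, mul_comm]
      rw [this]
      exact Submodule.smul_mem _ _ (Submodule.subset_span ⟨i, rfl⟩)
  have hLspan := hLspan0.trans hspankk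
  obtain ⟨eb, heb⟩ := quotPiBasis I n snf.bM
  have hφbM : ∀ j, φ (snf.bM j) = eb j := by
    intro j
    rw [heb j]
    rfl
  set S : Set (Fin n → R) :=
    Set.range (fun i => Ideal.Quotient.mk I (p ^ k i) • eb (snf.f i)) with hS
  have hMS : M'.restrictScalars A = Submodule.span A S := by
    have h1 : M'.restrictScalars A = Submodule.map φ L :=
      (Submodule.map_comap_eq_of_surjective hφsurj _).symm
    have h2 := congrArg (Submodule.map φ) hLspan
    rw [Submodule.map_span, ← Set.range_comp] at h2
    have h3 : ⇑φ ∘ (fun i => p ^ k i • snf.bM (snf.f i)) =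
        fun i => Ideal.Quotient.mk I (p ^ k i) • eb (snf.f i) := by
      funext i
      show φ (p ^ k i • snf.bM (snf.f i)) = _
      rw [map_smul, hφsmul, hφbM]
    rw [h3] at h2
    exact h1.trans h2
  have hM'span : M' = Submodule.span R S := by
    apply le_antisymm
    · intro x hx
      have hx' : x ∈ Submodule.span A S := by
        rw [← hMS]; exact hx
      exact Submodule.span_le_restrictScalars A R S hx'
    · rw [Submodule.span_le]
      intro x hx
      have : x ∈ Submodule.span A S := Submodule.subset_span hx
      rw [← hMS] at this
      exact this
  -- sort the exponents
  set τ : Equiv.Perm (Fin n) := Tuple.sort k with hτ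
  refine ⟨eb.reindex (τ.trans σ).symm, k ∘ τ, Tuple.monotone_sort k,
    fun i => hk _, ?_⟩
  rw [hM'span]
  congr 1
  have hfun : (fun j => Ideal.Quotient.mk I (p ^ (k ∘ ⇑τ) j) •
      (eb.reindex (τ.trans σ).symm) j) =
      (fun i => Ideal.Quotient.mk I (p ^ k i) • eb (snf.f i)) ∘ ⇑τ := by
    funext j
    simp only [Function.comp_apply, Module.Basis.reindex_apply, Equiv.symm_symm, Equiv.trans_apply]
    rfl
  rw [hfun, Set.range_comp, τ.surjective.range_eq, Set.image_univ]

/-- Elementary divisors lemma: if `A` is a PID, `p` a nonzero irreducible element,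
`r < N`, and `M'` is a submodule of `M = (A/p^N)^d` containing `p^r M`, then there is a
basis `(e_1, ..., e_d)` of `M` and integers `0 ≤ n_1 ≤ ... ≤ n_d ≤ r` such that `M'` is
generated by the elements `p^{n_i} e_i`. -/
theorem stmt0 (A : Type*) [CommRing A] [IsDomain A] [IsPrincipalIdealRing A]
    (p : A) (hp : Irreducible p) (hp0 : p ≠ 0)
    (N r d : ℕ) (hr : 0 < r) (hrN : r < N)
    (M' : Submodule (A ⧸ Ideal.span {p ^ N}) (Fin d → A ⧸ Ideal.span {p ^ N}))
    (hM' : ∀ m : Fin d → A ⧸ Ideal.span {p ^ N},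
      (Ideal.Quotient.mk (Ideal.span {p ^ N}) (p ^ r)) • m ∈ M') :
    ∃ (e : Module.Basis (Fin d) (A ⧸ Ideal.span {p ^ N}) (Fin d → A ⧸ Ideal.span {p ^ N}))
      (n : Fin d → ℕ), Monotone n ∧ (∀ i, n i ≤ r) ∧
      M' = Submodule.span (A ⧸ Ideal.span {p ^ N})
        (Set.range fun i => (Ideal.Quotient.mk (Ideal.span {p ^ N}) (p ^ n i)) • e i) :=
  key_lemma A p hp hp0 r d (Ideal.span {p ^ N}) M' hM'
end

section
/- Let A be a principal ideal domain and p a nonzero irreducible element of A, with M' ⊆ M = (A/p^N)^d a submodule containing p^r M (r < N), with associated adapted-basis integers n_1 ≤ ... ≤ n_d. Let (x_1, ..., x_D) be a generating family of M', G the d × D matrix of their components, and Ĝ a lift of G to a matrix over A. Then for every k ≤ d, the sum n_1 + ... + n_k equals the minimal p-adic valuation of a k × k minor of Ĝ. -/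
section Helpers

def nuF (d N : ℕ) (n : Fin d → ℕ) : ℕ → ℕ := fun m => if h : m < d then n ⟨m, h⟩ else N

theorem nuF_mono {d N : ℕ} {n : Fin d → ℕ} (hmono : Monotone n) (hnN : ∀ i, n i ≤ N) :
    Monotone (nuF d N n) := by
  intro a b hab
  unfold nuF
  by_cases ha : a < d
  · by_cases hb : b < d
    · simp only [dif_pos ha, dif_pos hb]
      exact hmono (show (⟨a, ha⟩ : Fin d) ≤ ⟨b, hb⟩ from hab)
    · simp only [dif_pos ha, dif_neg hb]
      exact hnN _
  · have hb : ¬ b < d := fun h => ha (lt_of_le_of_lt hab h)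
    simp [dif_neg ha, dif_neg hb]

theorem fin_strictMono_le {c M : ℕ} (f : Fin c → Fin M) (hf : StrictMono f) (i : Fin c) :
    (i : ℕ) ≤ (f i : ℕ) := by
  obtain ⟨i, hi⟩ := i
  induction i with
  | zero => exact Nat.zero_le _
  | succ m ih =>
    have hm : m < c := Nat.lt_of_succ_lt hi
    have h1 := ih hm
    have h2 : f ⟨m, hm⟩ < f ⟨m + 1, hi⟩ := hf (by simp [Fin.lt_def])
    have h3 := Fin.lt_def.mp h2
    have h4 : ((⟨m, hm⟩ : Fin c) : ℕ) = m := rfl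
    rw [h4] at h1
    show m + 1 ≤ ((f ⟨m + 1, hi⟩ : Fin M) : ℕ)
    omega

theorem sum_range_le_sum_finset (ν : ℕ → ℕ) (hν : Monotone ν) {M : ℕ} (S : Finset (Fin M)) :
    ∑ i ∈ Finset.range S.card, ν i ≤ ∑ u ∈ S, ν u.val := by
  calc ∑ i ∈ Finset.range S.card, ν i = ∑ i : Fin S.card, ν i.val := by
        rw [Fin.sum_univ_eq_sum_range]
    _ ≤ ∑ i : Fin S.card, ν ((S.orderEmbOfFin rfl) i).val := by
        apply Finset.sum_le_sum
        intro i _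
        exact hν (fin_strictMono_le _ (S.orderEmbOfFin rfl).strictMono i)
    _ = ∑ u ∈ S, ν u.val := by
        apply Finset.sum_bij (i := fun (i : Fin S.card) (_ : i ∈ Finset.univ) =>
          S.orderEmbOfFin rfl i)
        · intro a _; exact Finset.orderEmbOfFin_mem S rfl a
        · intro a _ b _ h; exact (S.orderEmbOfFin rfl).injective h
        · intro b hb
          have : b ∈ Set.range (S.orderEmbOfFin rfl) := by
            rw [Finset.range_orderEmbOfFin S rfl]; exact hb
          obtain ⟨a, ha⟩ := this
          exact ⟨a, Finset.mem_univ a, ha⟩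
        · intro a _; rfl

theorem sum_smallest {d D k N : ℕ} (n : Fin d → ℕ) (hmono : Monotone n) (hnN : ∀ i, n i ≤ N)
    (T : Finset (Fin k)) (σ : Fin k → Fin d ⊕ Fin D) (hinj : Set.InjOn σ T) :
    ∑ i ∈ Finset.range T.card, nuF d N n i ≤ ∑ i ∈ T, Sum.elim n (fun _ => N) (σ i) := by
  have hpt : ∀ i ∈ T, Sum.elim n (fun _ => N) (σ i)
      = nuF d N n ((finSumFinEquiv (σ i)) : ℕ) := by
    intro i _
    cases hσ : σ i with
    | inl t =>
        show _ = nuF d N n _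
        unfold nuF
        simp only [Sum.elim_inl, finSumFinEquiv_apply_left, Fin.coe_castAdd]
        simp
    | inr j =>
        show _ = nuF d N n _
        unfold nuF
        simp only [Sum.elim_inr, finSumFinEquiv_apply_right, Fin.coe_natAdd]
        simp
  rw [Finset.sum_congr rfl hpt]
  have hinj2 : ∀ a ∈ T, ∀ b ∈ T, finSumFinEquiv (σ a) = finSumFinEquiv (σ b) → a = b :=
    fun a ha b hb h => hinj ha hb (finSumFinEquiv.injective h)
  have heq := Finset.sum_image (f := fun u : Fin (d + D) => nuF d N n u.val)
      (g := fun i => finSumFinEquiv (σ i)) (s := T) hinj2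
  rw [← heq]
  have hcard : (T.image (fun i => finSumFinEquiv (σ i))).card = T.card :=
    Finset.card_image_of_injOn (fun a ha b hb h => hinj ha hb (finSumFinEquiv.injective h))
  have := sum_range_le_sum_finset (nuF d N n) (nuF_mono hmono hnN)
      (T.image (fun i => finSumFinEquiv (σ i)))
  rwa [hcard] at this

open Matrix in
theorem det_expand {B : Type*} [CommRing B] {k : ℕ} {κ : Type*} [Fintype κ] [DecidableEq κ]
    (Z : Matrix (Fin k) (Fin k) B) (u : Fin k → κ → (Fin k → B))
    (hZ : ∀ i l, Z l i = ∑ t, u i t l) :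
    Z.det = ∑ ρ : Fin k → κ, (Matrix.of fun i l => u i (ρ i) l).det := by
  rw [← Matrix.det_transpose Z]
  have h1 : Zᵀ = Matrix.of fun i => ∑ t, u i t := by
    ext i l
    simp [Matrix.transpose_apply, hZ, Finset.sum_apply]
  rw [h1]
  have h2 := (Matrix.detRowAlternating (R := B) (n := Fin k)).toMultilinearMap.map_sum
      (g := fun i (t : κ) => u i t)
  exact h2

theorem sum_filter_eq_sum_range {d N k : ℕ} (n : Fin d → ℕ) (hkd : k ≤ d) :
    ∑ i ∈ Finset.univ.filter (fun i : Fin d => (i : ℕ) < k), n i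
      = ∑ i ∈ Finset.range k, nuF d N n i := by
  apply Finset.sum_bij' (i := fun (a : Fin d) (_ : a ∈ _) => (a : ℕ))
    (j := fun (b : ℕ) (hb : b ∈ Finset.range k) =>
      (⟨b, lt_of_lt_of_le (Finset.mem_range.mp hb) hkd⟩ : Fin d))
    (hi := fun a ha => Finset.mem_range.mpr (Finset.mem_filter.mp ha).2)
    (hj := fun b hb => Finset.mem_filter.mpr ⟨Finset.mem_univ _, Finset.mem_range.mp hb⟩)
  · intro a ha; exact Fin.ext rfl
  · intro b hb; rfl
  · intro a ha
    show n a = nuF d N n (a : ℕ)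
    unfold nuF
    rw [dif_pos a.isLt]

theorem core_dvd {A : Type*} [CommRing A] (p : A) {N r d D : ℕ} (n : Fin d → ℕ)
    (hmono : Monotone n) (hnr : ∀ i, n i ≤ r) (hrN : r < N)
    (Ghat : Matrix (Fin d) (Fin D) A) (Ehat : Matrix (Fin d) (Fin d) A)
    (Chat : Matrix (Fin d) (Fin D) A) (H : Matrix (Fin d) (Fin D) A)
    (hrel : ∀ i j, Ghat i j = (∑ t, Chat t j * (p ^ n t * Ehat i t)) + p ^ N * H i j)
    {k : ℕ} (T : Finset (Fin k)) (Z : Matrix (Fin k) (Fin k) A) (f : Fin k → Fin d)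
    (hZcol : ∀ i ∈ T, ∃ j : Fin D, ∀ l, Z l i = Ghat (f l) j) :
    p ^ (∑ i ∈ Finset.range T.card, nuF d N n i) ∣ Z.det := by
  classical
  rcases T.eq_empty_or_nonempty with hT | hT
  · rw [hT]; simp
  obtain ⟨i₀, hi₀⟩ := hT
  obtain ⟨j₀, -⟩ := hZcol i₀ hi₀
  have hg : ∀ i, ∃ j : Fin D, i ∈ T → ∀ l, Z l i = Ghat (f l) j := by
    intro i
    by_cases h : i ∈ T
    · obtain ⟨j, hj⟩ := hZcol i h; exact ⟨j, fun _ => hj⟩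
    · exact ⟨j₀, fun h' => absurd h' h⟩
  choose g hgspec using hg
  set c : Fin k → (Fin d ⊕ Fin D) ⊕ Fin k → A := fun i t =>
    match t with
    | .inl (.inl t') => if i ∈ T then Chat t' (g i) * p ^ n t' else 0
    | .inl (.inr j) => if i ∈ T ∧ g i = j then p ^ N else 0
    | .inr i' => if i = i' ∧ i ∉ T then 1 else 0
    with hc
  set w : (Fin d ⊕ Fin D) ⊕ Fin k → Fin k → A := fun t =>
    match t with
    | .inl (.inl t') => fun l => Ehat (f l) t'
    | .inl (.inr j) => fun l => H (f l) j
    | .inr i' => fun l => Z l i'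
    with hw
  have hdecomp : ∀ i l, Z l i = ∑ t, (c i t • w t) l := by
    intro i l
    rw [Fintype.sum_sum_type, Fintype.sum_sum_type]
    by_cases hi : i ∈ T
    · have e1 : ∑ t' : Fin d, (c i (.inl (.inl t')) • w (.inl (.inl t'))) l
          = ∑ t' : Fin d, Chat t' (g i) * (p ^ n t' * Ehat (f l) t') := by
        apply Finset.sum_congr rfl
        intro t' _
        simp [hc, hw, hi, mul_assoc]
      have e2 : ∑ j : Fin D, (c i (.inl (.inr j)) • w (.inl (.inr j))) l
          = p ^ N * H (f l) (g i) := by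
        have : ∀ j : Fin D, (c i (.inl (.inr j)) • w (.inl (.inr j))) l
            = if g i = j then p ^ N * H (f l) j else 0 := by
          intro j
          by_cases hj : g i = j <;> simp [hc, hw, hi, hj]
        rw [Finset.sum_congr rfl fun j _ => this j, Finset.sum_ite_eq Finset.univ (g i)
          (fun j => p ^ N * H (f l) j)]
        simp
      have e3 : ∑ i' : Fin k, (c i (.inr i') • w (.inr i')) l = 0 := by
        apply Finset.sum_eq_zero
        intro i' _
        simp [hc, hw, hi]
      rw [e1, e2, e3, add_zero, ← hrel (f l) (g i), hgspec i hi l]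
    · have e1 : ∑ t' : Fin d, (c i (.inl (.inl t')) • w (.inl (.inl t'))) l = 0 := by
        apply Finset.sum_eq_zero; intro t' _; simp [hc, hw, hi]
      have e2 : ∑ j : Fin D, (c i (.inl (.inr j)) • w (.inl (.inr j))) l = 0 := by
        apply Finset.sum_eq_zero; intro j _; simp [hc, hw, hi]
      have e3 : ∑ i' : Fin k, (c i (.inr i') • w (.inr i')) l = Z l i := by
        have : ∀ i' : Fin k, (c i (.inr i') • w (.inr i')) l
            = if i = i' then Z l i' else 0 := by
          intro i'
          by_cases hii : i = i'
          · subst hii; simp [hc, hw, hi]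
          · simp [hc, hw, hii]
        rw [Finset.sum_congr rfl fun i' _ => this i', Finset.sum_ite_eq Finset.univ i
          (fun i' => Z l i')]
        simp
      rw [e1, e2, e3, zero_add, zero_add]
  rw [det_expand Z (fun i t => c i t • w t) hdecomp]
  apply Finset.dvd_sum
  intro ρ _
  have hfact : (Matrix.of fun i l => (c i (ρ i) • w (ρ i)) l).det
      = (∏ i, c i (ρ i)) * (Matrix.of fun i l => w (ρ i) l).det :=
    Matrix.det_mul_column (fun i => c i (ρ i)) (Matrix.of fun i l => w (ρ i) l)
  rw [hfact]
  by_cases h1 : ∃ i ∈ T, ∃ i', ρ i = Sum.inr i'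
  · obtain ⟨i, hiT, i', hi'⟩ := h1
    have hz : c i (ρ i) = 0 := by rw [hi']; simp [hc, hiT]
    rw [Finset.prod_eq_zero (Finset.mem_univ i) hz, zero_mul]
    exact dvd_zero _
  · push_neg at h1
    have hρσ : ∀ i ∈ T, ρ i = Sum.inl (Sum.elim id (fun _ => Sum.inr j₀) (ρ i)) := by
      intro i hi
      cases hρ : ρ i with
      | inl y => simp
      | inr i' => exact absurd hρ (h1 i hi i')
    set σ : Fin k → Fin d ⊕ Fin D := fun i => Sum.elim id (fun _ => Sum.inr j₀) (ρ i) with hσ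
    by_cases h2 : ∃ a ∈ T, ∃ b ∈ T, a ≠ b ∧ ρ a = ρ b
    · obtain ⟨a, ha, b, hb, hab, hρab⟩ := h2
      have hrow : (Matrix.of fun i l => w (ρ i) l) a = (Matrix.of fun i l => w (ρ i) l) b := by
        funext l
        show w (ρ a) l = w (ρ b) l
        rw [hρab]
      rw [Matrix.det_zero_of_row_eq hab hrow, mul_zero]
      exact dvd_zero _
    · push_neg at h2
      have hinjσ : Set.InjOn σ T := by
        intro a ha b hb hσab
        by_contra hne
        apply h2 a ha b hb hne
        rw [hρσ a ha, hρσ b hb]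
        exact congrArg Sum.inl hσab
      have hL2 := sum_smallest (D := D) n hmono
        (fun i => le_trans (hnr i) (le_of_lt hrN)) T σ hinjσ
      have hdvd1 : ∀ i ∈ T, p ^ (Sum.elim n (fun _ => N) (σ i)) ∣ c i (ρ i) := by
        intro i hi
        rw [hρσ i hi]
        show p ^ Sum.elim n (fun _ => N) (σ i) ∣ c i (Sum.inl (σ i))
        cases hσi : σ i with
        | inl t' => simp [hc, hi, hσi, dvd_mul_left]
        | inr j =>
          simp only [hc, hσi, Sum.elim_inr]
          by_cases hj : g i = j <;> simp [hi, hj]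
      have hprod : p ^ (∑ i ∈ T, Sum.elim n (fun _ => N) (σ i)) ∣ ∏ i ∈ T, c i (ρ i) := by
        rw [← Finset.prod_pow_eq_pow_sum]
        exact Finset.prod_dvd_prod_of_dvd _ _ hdvd1
      calc p ^ (∑ i ∈ Finset.range T.card, nuF d N n i)
          ∣ p ^ (∑ i ∈ T, Sum.elim n (fun _ => N) (σ i)) := pow_dvd_pow p hL2
        _ ∣ ∏ i ∈ T, c i (ρ i) := hprod
        _ ∣ ∏ i, c i (ρ i) := Finset.prod_dvd_prod_of_subset T Finset.univ _ (T.subset_univ)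
        _ ∣ (∏ i, c i (ρ i)) * (Matrix.of fun i l => w (ρ i) l).det := dvd_mul_right _ _

theorem arith_step {d N r k c : ℕ} (n : Fin d → ℕ) (hnr : ∀ i, n i ≤ r) (hrN : r < N)
    (hkd : k ≤ d) (hck : c < k) :
    (∑ i ∈ Finset.range k, nuF d N n i) + 1
      ≤ N * (k - c) + ∑ i ∈ Finset.range c, nuF d N n i := by
  have hsplit : ∑ i ∈ Finset.range c, nuF d N n i + ∑ i ∈ Finset.Ico c k, nuF d N n i
      = ∑ i ∈ Finset.range k, nuF d N n i := by
    rw [Finset.range_eq_Ico, Finset.range_eq_Ico]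
    exact Finset.sum_Ico_consecutive (nuF d N n) (Nat.zero_le c) (le_of_lt hck)
  have hbound : ∑ i ∈ Finset.Ico c k, nuF d N n i ≤ (k - c) * r := by
    have : ∀ i ∈ Finset.Ico c k, nuF d N n i ≤ r := by
      intro i hi
      have hik : i < k := (Finset.mem_Ico.mp hi).2
      have hid : i < d := lt_of_lt_of_le hik hkd
      unfold nuF
      rw [dif_pos hid]
      exact hnr _
    calc ∑ i ∈ Finset.Ico c k, nuF d N n i ≤ (Finset.Ico c k).card * r :=
          Finset.sum_le_card_nsmul _ _ r this
      _ = (k - c) * r := by rw [Nat.card_Ico]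
  have hm : 1 ≤ k - c := by omega
  have h4 : (k - c) * (r + 1) = (k - c) * r + (k - c) := by ring
  have h5 : (k - c) * (r + 1) ≤ (k - c) * N := Nat.mul_le_mul_left _ (by omega)
  have h6 : (k - c) * N = N * (k - c) := by ring
  omega

end Helpers



/-- In the setting of the elementary divisors lemma, with adapted-basis integers
`n_1 ≤ ... ≤ n_d`: if `(x_1, ..., x_D)` generates `M'`, `G` is the `d × D` matrix of their
components and `Ĝ` lifts `G` to `A`, then for every `1 ≤ k ≤ d` the sum `n_1 + ... + n_k`
is the minimal `p`-adic valuation of a `k × k` minor of `Ĝ`: `p^{n_1+...+n_k}` divides every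
`k × k` minor, and some `k × k` minor is not divisible by `p^{n_1+...+n_k+1}`. -/
theorem stmt2 (A : Type*) [CommRing A] [IsDomain A] [IsPrincipalIdealRing A]
    (p : A) (hp : Irreducible p) (hp0 : p ≠ 0)
    (N r d D : ℕ) (hr : 0 < r) (hrN : r < N)
    (M' : Submodule (A ⧸ Ideal.span {p ^ N}) (Fin d → A ⧸ Ideal.span {p ^ N}))
    (hM' : ∀ m : Fin d → A ⧸ Ideal.span {p ^ N},
      (Ideal.Quotient.mk (Ideal.span {p ^ N}) (p ^ r)) • m ∈ M')
    (e : Module.Basis (Fin d) (A ⧸ Ideal.span {p ^ N}) (Fin d → A ⧸ Ideal.span {p ^ N}))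
    (n : Fin d → ℕ) (hmono : Monotone n) (hnr : ∀ i, n i ≤ r)
    (hgen : M' = Submodule.span (A ⧸ Ideal.span {p ^ N})
      (Set.range fun i => (Ideal.Quotient.mk (Ideal.span {p ^ N}) (p ^ n i)) • e i))
    (x : Fin D → (Fin d → A ⧸ Ideal.span {p ^ N}))
    (hx : Submodule.span (A ⧸ Ideal.span {p ^ N}) (Set.range x) = M')
    (Ghat : Matrix (Fin d) (Fin D) A)
    (hlift : ∀ i j, Ideal.Quotient.mk (Ideal.span {p ^ N}) (Ghat i j) = x j i) :
    ∀ k : ℕ, 1 ≤ k → k ≤ d →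
      (∀ (f : Fin k ↪ Fin d) (g : Fin k ↪ Fin D),
        p ^ (∑ i ∈ Finset.univ.filter fun i : Fin d => (i : ℕ) < k, n i) ∣
          (Ghat.submatrix f g).det) ∧
      (∃ (f : Fin k ↪ Fin d) (g : Fin k ↪ Fin D),
        ¬ p ^ ((∑ i ∈ Finset.univ.filter fun i : Fin d => (i : ℕ) < k, n i) + 1) ∣
          (Ghat.submatrix f g).det) := by
  classical
  set Q : A →+* (A ⧸ Ideal.span {p ^ N}) := Ideal.Quotient.mk (Ideal.span {p ^ N}) with hQ
  -- lift of the basis matrix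
  have hEhat : ∀ i t : Fin d, ∃ a, Q a = e t i := fun i t => Ideal.Quotient.mk_surjective _
  choose Ehat hE using hEhat
  -- coefficients expressing x over the adapted generators
  have hxspan : ∀ j, x j ∈ Submodule.span (A ⧸ Ideal.span {p ^ N})
      (Set.range fun i => Q (p ^ n i) • e i) := by
    intro j
    rw [← hgen, ← hx]
    exact Submodule.subset_span (Set.mem_range_self j)
  have hcoeff : ∀ j, ∃ cc : Fin d → (A ⧸ Ideal.span {p ^ N}),
      ∑ t, cc t • (Q (p ^ n t) • e t) = x j :=
    fun j => (Submodule.mem_span_range_iff_exists_fun _).mp (hxspan j)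
  choose cc hcc using hcoeff
  have hChat : ∀ t j, ∃ a, Q a = cc j t := fun t j => Ideal.Quotient.mk_surjective _
  choose Chat hC using hChat
  have hrelG : ∀ i j, ∃ h, Ghat i j = (∑ t, Chat t j * (p ^ n t * Ehat i t)) + p ^ N * h := by
    intro i j
    have h1 : Q (Ghat i j) = Q (∑ t, Chat t j * (p ^ n t * Ehat i t)) := by
      rw [map_sum]
      have h2 := congrFun (hcc j) i
      simp only [Finset.sum_apply, Pi.smul_apply, smul_eq_mul] at h2
      rw [hlift i j, ← h2]
      apply Finset.sum_congr rfl
      intro t _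
      rw [map_mul, map_mul, hC t j, hE i t]
    have h2 : Ghat i j - ∑ t, Chat t j * (p ^ n t * Ehat i t) ∈ Ideal.span {p ^ N} :=
      Ideal.Quotient.eq.mp h1
    obtain ⟨a, ha⟩ := Ideal.mem_span_singleton'.mp h2
    exact ⟨a, by linear_combination -ha⟩
  choose H hrelG using hrelG
  -- coefficients expressing the adapted generators over x
  have hvspan : ∀ t, (Q (p ^ n t) • e t) ∈ Submodule.span (A ⧸ Ideal.span {p ^ N})
      (Set.range x) := by
    intro t
    rw [hx, hgen]
    exact Submodule.subset_span (Set.mem_range_self t)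
  have hqcoeff : ∀ t, ∃ qq : Fin D → (A ⧸ Ideal.span {p ^ N}),
      ∑ j, qq j • x j = Q (p ^ n t) • e t :=
    fun t => (Submodule.mem_span_range_iff_exists_fun _).mp (hvspan t)
  choose qq hqq using hqcoeff
  have hQhat : ∀ j t, ∃ a, Q a = qq t j := fun j t => Ideal.Quotient.mk_surjective _
  choose Qhat hQh using hQhat
  have hrelE : ∀ i t, ∃ kk, p ^ n t * Ehat i t = (∑ j, Qhat j t * Ghat i j) + p ^ N * kk := by
    intro i t
    have h1 : Q (p ^ n t * Ehat i t) = Q (∑ j, Qhat j t * Ghat i j) := by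
      rw [map_sum, map_mul, hE i t]
      have h2 := congrFun (hqq t) i
      simp only [Finset.sum_apply, Pi.smul_apply, smul_eq_mul] at h2
      rw [← h2]
      apply Finset.sum_congr rfl
      intro j _
      rw [map_mul, hQh j t, hlift i j]
    have h2 : p ^ n t * Ehat i t - ∑ j, Qhat j t * Ghat i j ∈ Ideal.span {p ^ N} :=
      Ideal.Quotient.eq.mp h1
    obtain ⟨a, ha⟩ := Ideal.mem_span_singleton'.mp h2
    exact ⟨a, by linear_combination -ha⟩
  choose K hrelE using hrelE
  intro k hk1 hkd
  constructor
  · -- part 1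
    intro f g
    have hcore := core_dvd p n hmono hnr hrN Ghat Ehat Chat H hrelG
      (Finset.univ : Finset (Fin k)) (Ghat.submatrix f g) f
      (fun i _ => ⟨g i, fun l => rfl⟩)
    rw [Finset.card_univ, Fintype.card_fin] at hcore
    rw [sum_filter_eq_sum_range (N := N) n hkd]
    exact hcore
  · -- part 2
    by_contra hall
    push_neg at hall
    rw [sum_filter_eq_sum_range (N := N) n hkd] at hall
    set s := ∑ i ∈ Finset.range k, nuF d N n i with hs
    set g0 : Fin k → Fin d := Fin.castLE hkd with hg0
    have hg0inj : Function.Injective g0 := Fin.castLE_injective hkd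
    -- find rows f giving a minor of Ehat not divisible by p
    have hexf : ∃ f : Fin k → Fin d, ¬ p ∣ ((Matrix.of Ehat).submatrix f g0).det := by
      by_contra hf
      push_neg at hf
      set P : Matrix (Fin d) (Fin d) (A ⧸ Ideal.span {p ^ N}) :=
        (Pi.basisFun (A ⧸ Ideal.span {p ^ N}) (Fin d)).toMatrix ⇑e with hP
      set P' : Matrix (Fin d) (Fin d) (A ⧸ Ideal.span {p ^ N}) :=
        e.toMatrix ⇑(Pi.basisFun (A ⧸ Ideal.span {p ^ N}) (Fin d)) with hP'
      have hPE : ∀ i t, P i t = Q (Ehat i t) := by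
        intro i t
        rw [hE i t, hP, Module.Basis.toMatrix_apply, Pi.basisFun_repr]
      have hPP' : P' * P = 1 := Module.Basis.toMatrix_mul_toMatrix_flip e (Pi.basisFun _ (Fin d))
      have h2 : P.transpose * P'.transpose = 1 := by rw [← Matrix.transpose_mul, hPP', Matrix.transpose_one]
      have h1 : ((1 : Matrix (Fin d) (Fin d) (A ⧸ Ideal.span {p ^ N}))).submatrix g0 g0
          = (1 : Matrix (Fin k) (Fin k) (A ⧸ Ideal.span {p ^ N})) := by
        ext a b
        simp [Matrix.submatrix_apply, Matrix.one_apply, hg0inj.eq_iff]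
      have h3 : (P.transpose.submatrix g0 id) * (P'.transpose.submatrix id g0) = 1 := by
        rw [← Matrix.submatrix_mul _ _ _ _ _ Function.bijective_id, h2, h1]
      have hdec : ∀ i l, (P.transpose.submatrix g0 id * P'.transpose.submatrix id g0) l i
          = ∑ t : Fin d, ((P' (g0 i) t) • (fun l' => P t (g0 l'))) l := by
        intro i l
        rw [Matrix.mul_apply]
        apply Finset.sum_congr rfl
        intro t _
        simp only [Matrix.submatrix_apply, Matrix.transpose_apply, id_eq, Pi.smul_apply,
          smul_eq_mul]
        ring
      have hexp := det_expand _ _ hdec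
      rw [h3, Matrix.det_one] at hexp
      have hdvd : (Q p) ∣ (1 : A ⧸ Ideal.span {p ^ N}) := by
        rw [hexp]
        apply Finset.dvd_sum
        intro ρ _
        have hfact : (Matrix.of fun i l =>
              ((P' (g0 i) (ρ i)) • (fun l' => P (ρ i) (g0 l'))) l).det
            = (∏ i, P' (g0 i) (ρ i)) * (Matrix.of fun i l => P (ρ i) (g0 l)).det :=
          Matrix.det_mul_column (fun i => P' (g0 i) (ρ i)) (Matrix.of fun i l => P (ρ i) (g0 l))
        rw [hfact]
        have hmap : Matrix.of (fun i l => P (ρ i) (g0 l))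
            = Q.mapMatrix ((Matrix.of Ehat).submatrix ρ g0) := by
          ext a b
          simp [RingHom.mapMatrix_apply, Matrix.map_apply, Matrix.submatrix_apply, hPE]
        rw [hmap, ← RingHom.map_det]
        obtain ⟨cdiv, hcdiv⟩ := hf ρ
        rw [hcdiv, map_mul]
        exact Dvd.dvd.mul_left (dvd_mul_right (Q p) (Q cdiv)) _
      obtain ⟨y, hy⟩ := hdvd
      obtain ⟨yh, rfl⟩ := Ideal.Quotient.mk_surjective y
      have h5 : (1 : A) - p * yh ∈ Ideal.span {p ^ N} := by
        have h6 : Q (1 - p * yh) = 0 := by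
          rw [map_sub, map_mul, map_one, ← hy, sub_self]
        rwa [Ideal.Quotient.eq_zero_iff_mem] at h6
      obtain ⟨a, ha⟩ := Ideal.mem_span_singleton'.mp h5
      have hNs : (p : A) ^ N = p * p ^ (N - 1) := by
        conv_lhs => rw [show N = 1 + (N - 1) by omega]
        rw [pow_add, pow_one]
      have hdvd1 : p ∣ (1 : A) := ⟨yh + a * p ^ (N - 1), by linear_combination a * hNs - ha⟩
      exact hp.not_isUnit (isUnit_of_dvd_one hdvd1)
    obtain ⟨f, hfE⟩ := hexf
    have hfinj : Function.Injective f := by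
      by_contra hni
      apply hfE
      simp only [Function.Injective, not_forall] at hni
      obtain ⟨a, b, hab, hne⟩ := hni
      have hz : ((Matrix.of Ehat).submatrix f g0).det = 0 := by
        apply Matrix.det_zero_of_row_eq hne
        funext j
        simp [Matrix.submatrix_apply, hab]
      rw [hz]
      exact dvd_zero p
    set W : Matrix (Fin k) (Fin k) A :=
      Matrix.of (fun l i => p ^ n (g0 i) * Ehat (f l) (g0 i)) with hW
    have hWdet : W.det = (∏ i, p ^ n (g0 i)) * ((Matrix.of Ehat).submatrix f g0).det :=
      Matrix.det_mul_row (fun i => p ^ n (g0 i)) ((Matrix.of Ehat).submatrix f g0)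
    have hprodW : (∏ i : Fin k, (p : A) ^ n (g0 i)) = p ^ s := by
      rw [Finset.prod_pow_eq_pow_sum]
      congr 1
      rw [hs, ← Fin.sum_univ_eq_sum_range (fun m => nuF d N n m) k]
      apply Finset.sum_congr rfl
      intro i _
      show n (g0 i) = nuF d N n i.val
      unfold nuF
      rw [dif_pos (lt_of_lt_of_le i.isLt hkd)]
      exact congrArg n (Fin.ext rfl)
    have hnotdvd : ¬ p ^ (s + 1) ∣ W.det := by
      rw [hWdet, hprodW]
      rintro ⟨cdiv, hcdiv⟩
      apply hfE
      refine ⟨cdiv, ?_⟩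
      have hps : (p : A) ^ s ≠ 0 := pow_ne_zero s hp0
      apply mul_left_cancel₀ hps
      rw [hcdiv]
      ring
    apply hnotdvd
    set cW : Fin k → (Fin D ⊕ Fin k) → A := fun i t =>
      match t with
      | .inl j => Qhat j (g0 i)
      | .inr i' => if i = i' then p ^ N else 0
      with hcW
    set wW : (Fin D ⊕ Fin k) → Fin k → A := fun t =>
      match t with
      | .inl j => fun l => Ghat (f l) j
      | .inr i' => fun l => K (f l) (g0 i')
      with hwW
    have hdecW : ∀ i l, W l i = ∑ t, (cW i t • wW t) l := by
      intro i l
      rw [Fintype.sum_sum_type]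
      have e2 : ∑ i' : Fin k, (cW i (.inr i') • wW (.inr i')) l
          = p ^ N * K (f l) (g0 i) := by
        have hterm : ∀ i' : Fin k, (cW i (.inr i') • wW (.inr i')) l
            = if i = i' then p ^ N * K (f l) (g0 i') else 0 := by
          intro i'
          by_cases hii : i = i' <;> simp [hcW, hwW, hii]
        rw [Finset.sum_congr rfl fun i' _ => hterm i', Finset.sum_ite_eq Finset.univ i _]
        simp
      have e1 : ∑ j : Fin D, (cW i (.inl j) • wW (.inl j)) l
          = ∑ j, Qhat j (g0 i) * Ghat (f l) j := by
        apply Finset.sum_congr rfl; intro j _; simp [hcW, hwW]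
      rw [e1, e2]
      exact hrelE (f l) (g0 i)
    rw [det_expand W _ hdecW]
    apply Finset.dvd_sum
    intro ρ _
    have hfact : (Matrix.of fun i l => (cW i (ρ i) • wW (ρ i)) l).det
        = (∏ i, cW i (ρ i)) * (Matrix.of fun i l => wW (ρ i) l).det :=
      Matrix.det_mul_column (fun i => cW i (ρ i)) (Matrix.of fun i l => wW (ρ i) l)
    rw [hfact]
    by_cases h2 : ∃ a b : Fin k, a ≠ b ∧ ρ a = ρ b
    · obtain ⟨a, b, hab, hρab⟩ := h2
      have hrow : (Matrix.of fun i l => wW (ρ i) l) a = (Matrix.of fun i l => wW (ρ i) l) b := by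
        funext l; show wW (ρ a) l = wW (ρ b) l; rw [hρab]
      rw [Matrix.det_zero_of_row_eq hab hrow, mul_zero]
      exact dvd_zero _
    · push_neg at h2
      have hρinj : Function.Injective ρ := by
        intro a b hab; by_contra hne; exact h2 a b hne hab
      by_cases h3 : ∀ i, ∃ j, ρ i = Sum.inl j
      · choose φ hφ using h3
        have hφinj : Function.Injective φ := by
          intro a b hab
          apply hρinj
          rw [hφ a, hφ b, hab]
        have hmat : (Matrix.of fun i l => wW (ρ i) l) = (Ghat.submatrix f φ).transpose := by
          ext i l
          show wW (ρ i) l = Ghat (f l) (φ i)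
          rw [hφ i]
        rw [hmat, Matrix.det_transpose]
        exact Dvd.dvd.mul_left (hall ⟨f, hfinj⟩ ⟨φ, hφinj⟩) _
      · push_neg at h3
        obtain ⟨istar, histar⟩ := h3
        set T : Finset (Fin k) := Finset.univ.filter (fun i => (ρ i).isLeft) with hT
        have histarT : istar ∉ T := by
          simp only [hT, Finset.mem_filter, Finset.mem_univ, true_and]
          cases hρi : ρ istar with
          | inl j => exact absurd hρi (histar j)
          | inr i' => simp
        have hTcard : T.card < k := by
          have h5 : T.card ≤ k := by
            have := Finset.card_le_univ T
            simpa using this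
          rcases lt_or_eq_of_le h5 with h | h
          · exact h
          · exfalso
            have : T = Finset.univ := Finset.card_eq_iff_eq_univ T |>.mp (by simp [h])
            exact histarT (this ▸ Finset.mem_univ istar)
        have hcols : ∀ i ∈ T, ∃ j : Fin D, ∀ l,
            (Matrix.of fun l i => wW (ρ i) l) l i = Ghat (f l) j := by
          intro i hi
          have hil : (ρ i).isLeft := (Finset.mem_filter.mp hi).2
          obtain ⟨y, hy⟩ := Sum.isLeft_iff.mp hil
          exact ⟨y, fun l => by simp [hwW, hy]⟩
        have hcore := core_dvd p n hmono hnr hrN Ghat Ehat Chat H hrelG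
          T (Matrix.of fun l i => wW (ρ i) l) f hcols
        have hdetT : (Matrix.of fun l i => wW (ρ i) l).det
            = (Matrix.of fun i l => wW (ρ i) l).det := by
          rw [← Matrix.det_transpose (Matrix.of fun i l => wW (ρ i) l)]
          rfl
        rw [hdetT] at hcore
        have hcompl : ∀ i ∈ Tᶜ, (p : A) ^ N ∣ cW i (ρ i) := by
          intro i hi
          have hnl : ¬ (ρ i).isLeft := by
            have := Finset.mem_compl.mp hi
            simpa [hT] using this
          cases hρi : ρ i with
          | inl j => exact absurd (by rw [hρi]; rfl) hnl
          | inr i' =>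
            show (p : A) ^ N ∣ if i = i' then p ^ N else 0
            split_ifs
            · exact dvd_rfl
            · exact dvd_zero _
        have hprodc : (p : A) ^ (N * Tᶜ.card) ∣ ∏ i ∈ Tᶜ, cW i (ρ i) := by
          rw [show N * Tᶜ.card = ∑ _i ∈ Tᶜ, N by
            rw [Finset.sum_const, smul_eq_mul, mul_comm]]
          rw [← Finset.prod_pow_eq_pow_sum]
          exact Finset.prod_dvd_prod_of_dvd _ _ hcompl
        have hTccard : Tᶜ.card = k - T.card := by
          rw [Finset.card_compl]
          simp
        have harith := arith_step n hnr hrN hkd hTcard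
        calc p ^ (s + 1)
            ∣ p ^ (N * (k - T.card) + ∑ i ∈ Finset.range T.card, nuF d N n i) :=
              pow_dvd_pow p harith
          _ ∣ (∏ i ∈ Tᶜ, cW i (ρ i)) * (Matrix.of fun i l => wW (ρ i) l).det := by
              rw [pow_add, ← hTccard]
              exact mul_dvd_mul hprodc hcore
          _ ∣ (∏ i, cW i (ρ i)) * (Matrix.of fun i l => wW (ρ i) l).det := by
              rw [← Finset.prod_mul_prod_compl T (fun i => cW i (ρ i))]
              exact mul_dvd_mul (dvd_mul_left _ _) dvd_rfl
end

section
/- Let a'_1 ≤ ... ≤ a'_{d'}, a''_1 ≤ ... ≤ a''_{d''}, b'_1 ≤ ... ≤ b'_{d'}, b''_1 ≤ ... ≤ b''_{d''} be real numbers. Suppose that for all m ≤ d', a'_1 + ... + a'_m ≤ b'_1 + ... + b'_m with equality for m = d', and similarly for the double-primed sequences. Then for every k ≤ d' + d'', the sum of the k smallest elements of the multiset {a'_i} ∪ {a''_j} is at most the sum of the k smallest elements of the multiset {b'_i} ∪ {b''_j}, with equality when k = d' + d''. -/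
open Multiset List

lemma take_sum_le_sublist : ∀ {l l' : List ℝ}, l' <+ l → l.Pairwise (· ≤ ·) →
    (l.take l'.length).sum ≤ l'.sum := by
  intro l l' h
  induction h with
  | slnil => simp
  | @cons l₁ l₂ a h ih =>
    intro hs
    have ih' := ih hs.of_cons
    rcases Nat.eq_zero_or_pos l₁.length with h0 | hpos
    · simp [List.length_eq_zero_iff.mp h0]
    obtain ⟨k, hk⟩ : ∃ k, l₁.length = k + 1 := ⟨l₁.length - 1, by omega⟩
    have hklt : k < l₂.length := by have := h.length_le; omega
    rw [hk] at ih' ⊢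
    rw [List.take_succ_cons, List.sum_cons]
    have ha : a ≤ l₂[k] := (List.pairwise_cons.mp hs).1 _ (List.getElem_mem hklt)
    have hts : (l₂.take (k+1)).sum = (l₂.take k).sum + l₂[k] := by
      rw [List.take_succ, List.getElem?_eq_getElem hklt, List.sum_append, Option.toList_some, List.sum_cons, List.sum_nil, add_zero]
    linarith
  | @cons_cons l₁ l₂ a h ih =>
    intro hs
    simp only [List.length_cons, List.take_succ_cons, List.sum_cons]
    exact add_le_add_right (ih hs.of_cons) a

lemma take_min {s u : Multiset ℝ} (h : u ≤ s) :
    (((s.sort (· ≤ ·)).take (Multiset.card u)).sum) ≤ u.sum := by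
  have hsub : (u.sort (· ≤ ·)) <+ (s.sort (· ≤ ·)) := by
    apply List.sublist_of_subperm_of_pairwise _ (Multiset.pairwise_sort u _)
      (Multiset.pairwise_sort s _)
    rw [← Multiset.coe_le, Multiset.sort_eq, Multiset.sort_eq]
    exact h
  have := take_sum_le_sublist hsub (Multiset.pairwise_sort s _)
  rwa [Multiset.length_sort, show ((u.sort (· ≤ ·)).sum = u.sum) from by
    conv_rhs => rw [← Multiset.sort_eq u (· ≤ ·)]
    exact (Multiset.sum_coe _).symm] at this

lemma decomp {u s t : Multiset ℝ} (h : u ≤ s + t) :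
    ∃ u₁ u₂, u₁ ≤ s ∧ u₂ ≤ t ∧ u = u₁ + u₂ := by
  classical
  refine ⟨u - (u - s), u - s, ?_, ?_, ?_⟩
  · rw [Multiset.le_iff_count]; intro a
    simp only [Multiset.count_sub]; omega
  · rw [Multiset.le_iff_count]; intro a
    have := (Multiset.le_iff_count.mp h) a
    simp only [Multiset.count_sub, Multiset.count_add] at *; omega
  · ext a
    simp only [Multiset.count_add, Multiset.count_sub]; omega

lemma sort_map_univ {d : ℕ} {f : Fin d → ℝ} (hf : Monotone f) :
    (Multiset.map f Finset.univ.val).sort (· ≤ ·) = List.ofFn f := by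
  refine List.Perm.eq_of_pairwise' (Multiset.pairwise_sort _ _)
    (List.sortedLE_ofFn_iff.mpr hf).pairwise ?_
  rw [← Multiset.coe_eq_coe, Multiset.sort_eq, List.ofFn_eq_map, Fin.univ_def]
  simp [Multiset.map_coe]

lemma coe_take_le (s : Multiset ℝ) (i : ℕ) :
    (↑((s.sort (· ≤ ·)).take i) : Multiset ℝ) ≤ s := by
  refine le_trans (Multiset.coe_le.mpr (List.take_sublist _ _).subperm) ?_
  rw [Multiset.sort_eq]

lemma T_add_le {s t : Multiset ℝ} {i j : ℕ} (hi : i ≤ Multiset.card s)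
    (hj : j ≤ Multiset.card t) :
    (((s + t).sort (· ≤ ·)).take (i + j)).sum ≤
      ((s.sort (· ≤ ·)).take i).sum + ((t.sort (· ≤ ·)).take j).sum := by
  set u : Multiset ℝ := ↑((s.sort (· ≤ ·)).take i) + ↑((t.sort (· ≤ ·)).take j) with hu
  have hule : u ≤ s + t := add_le_add (coe_take_le s i) (coe_take_le t j)
  have hcard : Multiset.card u = i + j := by
    simp [hu, List.length_take, Multiset.length_sort, Nat.min_eq_left hi,
      Nat.min_eq_left hj]
  have := take_min hule
  rw [hcard] at this
  simpa [hu, Multiset.sum_coe] using this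

/-- Merging lemma for polygons: if the polygon of `a'` is below that of `b'` with the same
endpoint, and similarly for `a''`, `b''`, then the polygon of the merged multiset
`{a'} ∪ {a''}` is below that of `{b'} ∪ {b''}` with the same endpoint. Partial sums of the
`k` smallest elements are compared via sorted lists. -/
theorem stmt3 (d' d'' : ℕ) (a' b' : Fin d' → ℝ) (a'' b'' : Fin d'' → ℝ)
    (ha' : Monotone a') (hb' : Monotone b') (ha'' : Monotone a'') (hb'' : Monotone b'')
    (hle' : ∀ m : ℕ, m ≤ d' →
      (∑ i ∈ Finset.univ.filter fun i : Fin d' => (i : ℕ) < m, a' i) ≤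
      (∑ i ∈ Finset.univ.filter fun i : Fin d' => (i : ℕ) < m, b' i))
    (heq' : ∑ i, a' i = ∑ i, b' i)
    (hle'' : ∀ m : ℕ, m ≤ d'' →
      (∑ i ∈ Finset.univ.filter fun i : Fin d'' => (i : ℕ) < m, a'' i) ≤
      (∑ i ∈ Finset.univ.filter fun i : Fin d'' => (i : ℕ) < m, b'' i))
    (heq'' : ∑ i, a'' i = ∑ i, b'' i) :
    (∀ k : ℕ, k ≤ d' + d'' →
      ((((Multiset.map a' Finset.univ.val) + (Multiset.map a'' Finset.univ.val)).sort
          (· ≤ ·)).take k).sum ≤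
      ((((Multiset.map b' Finset.univ.val) + (Multiset.map b'' Finset.univ.val)).sort
          (· ≤ ·)).take k).sum) ∧
    ((((Multiset.map a' Finset.univ.val) + (Multiset.map a'' Finset.univ.val)).sort
        (· ≤ ·)).take (d' + d'')).sum =
    ((((Multiset.map b' Finset.univ.val) + (Multiset.map b'' Finset.univ.val)).sort
        (· ≤ ·)).take (d' + d'')).sum := by
  set sa' := Multiset.map a' Finset.univ.val with hsa'
  set sa'' := Multiset.map a'' Finset.univ.val with hsa''
  set sb' := Multiset.map b' Finset.univ.val with hsb'
  set sb'' := Multiset.map b'' Finset.univ.val with hsb''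
  have hca' : Multiset.card sa' = d' := by simp [hsa']
  have hca'' : Multiset.card sa'' = d'' := by simp [hsa'']
  have hcb' : Multiset.card sb' = d' := by simp [hsb']
  have hcb'' : Multiset.card sb'' = d'' := by simp [hsb'']
  -- partial sums compare
  have hT' : ∀ i ≤ d', ((sa'.sort (· ≤ ·)).take i).sum ≤ ((sb'.sort (· ≤ ·)).take i).sum := by
    intro i hi
    rw [hsa', hsb', sort_map_univ ha', sort_map_univ hb', List.sum_take_ofFn,
      List.sum_take_ofFn]
    exact hle' i hi
  have hT'' : ∀ i ≤ d'', ((sa''.sort (· ≤ ·)).take i).sum ≤ ((sb''.sort (· ≤ ·)).take i).sum := by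
    intro i hi
    rw [hsa'', hsb'', sort_map_univ ha'', sort_map_univ hb'', List.sum_take_ofFn,
      List.sum_take_ofFn]
    exact hle'' i hi
  have key : ∀ k : ℕ, k ≤ d' + d'' →
      (((sa' + sa'').sort (· ≤ ·)).take k).sum ≤ (((sb' + sb'').sort (· ≤ ·)).take k).sum := by
    intro k hk
    -- decompose the k smallest of b-side
    set ub : Multiset ℝ := ↑(((sb' + sb'').sort (· ≤ ·)).take k) with hub
    have hub_le : ub ≤ sb' + sb'' := coe_take_le _ k
    have hub_card : Multiset.card ub = k := by
      simp [hub, List.length_take, Multiset.length_sort, hcb', hcb'', Nat.min_eq_left hk]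
    obtain ⟨u₁, u₂, hu₁, hu₂, huu⟩ := decomp hub_le
    set i := Multiset.card u₁ with hi
    set j := Multiset.card u₂ with hj
    have hij : i + j = k := by rw [hi, hj, ← Multiset.card_add, ← huu, hub_card]
    have hi' : i ≤ d' := by rw [hi, ← hcb']; exact Multiset.card_le_card hu₁
    have hj' : j ≤ d'' := by rw [hj, ← hcb'']; exact Multiset.card_le_card hu₂
    calc (((sa' + sa'').sort (· ≤ ·)).take k).sum
        = (((sa' + sa'').sort (· ≤ ·)).take (i + j)).sum := by rw [hij]
      _ ≤ ((sa'.sort (· ≤ ·)).take i).sum + ((sa''.sort (· ≤ ·)).take j).sum :=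
          T_add_le (hca' ▸ hi') (hca'' ▸ hj')
      _ ≤ ((sb'.sort (· ≤ ·)).take i).sum + ((sb''.sort (· ≤ ·)).take j).sum :=
          add_le_add (hT' i hi') (hT'' j hj')
      _ ≤ u₁.sum + u₂.sum := add_le_add (take_min hu₁) (take_min hu₂)
      _ = ub.sum := by rw [huu, Multiset.sum_add]
      _ = (((sb' + sb'').sort (· ≤ ·)).take k).sum := by rw [hub, Multiset.sum_coe]
  refine ⟨key, ?_⟩
  -- equality at the endpoint
  have hfull : ∀ (s : Multiset ℝ), Multiset.card s = d' + d'' →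
      ((s.sort (· ≤ ·)).take (d' + d'')).sum = s.sum := by
    intro s hs
    rw [List.take_of_length_le (by rw [Multiset.length_sort, hs])]
    rw [← Multiset.sum_coe, Multiset.sort_eq]
  rw [hfull _ (by simp [hca', hca'']), hfull _ (by simp [hcb', hcb''])]
  simp only [Multiset.sum_add, hsa', hsa'', hsb', hsb'']
  rw [show (Multiset.map a' Finset.univ.val).sum = ∑ i, a' i from rfl,
    show (Multiset.map a'' Finset.univ.val).sum = ∑ i, a'' i from rfl,
    show (Multiset.map b' Finset.univ.val).sum = ∑ i, b' i from rfl,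
    show (Multiset.map b'' Finset.univ.val).sum = ∑ i, b'' i from rfl, heq', heq'']
end

section
/- With the strict compatibility assumption of the previous statement, for every element s ∈ S₁ (acting by multiplication), the natural maps s·N'/(s·N' ∩ Fil N') → s·N/(s·N ∩ Fil N) → s·N''/(s·N'' ∩ Fil N'') are respectively injective and surjective; consequently, when these are finite-dimensional vector spaces over a field k, dim_k(s·N/(s·N ∩ Fil N)) ≥ dim_k(s·N'/(s·N' ∩ Fil N')) + dim_k(s·N''/(s·N'' ∩ Fil N'')). -/
/-- With a short exact sequence `0 → N' → N → N'' → 0` of `S₁`-modules strictly compatible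
with filtrations `Fil`, and `s ∈ S₁`, the natural maps
`s·N'/(s·N' ∩ Fil N') → s·N/(s·N ∩ Fil N) → s·N''/(s·N'' ∩ Fil N'')` are respectively
injective and surjective (here `s·N/(s·N ∩ Fil N)` is realized as the image of `s·N` in
`N/Fil N`); consequently, when these are finite-dimensional over a field `k`,
`dim (s·N/(s·N ∩ Fil N)) ≥ dim (s·N'/(s·N' ∩ Fil N')) + dim (s·N''/(s·N'' ∩ Fil N''))`. -/
theorem stmt15 (k S₁ : Type*) [Field k] [CommRing S₁] [Algebra k S₁]
    (M' M M'' : Type*)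
    [AddCommGroup M'] [AddCommGroup M] [AddCommGroup M'']
    [Module S₁ M'] [Module S₁ M] [Module S₁ M'']
    [Module k M'] [Module k M] [Module k M'']
    [IsScalarTower k S₁ M'] [IsScalarTower k S₁ M] [IsScalarTower k S₁ M'']
    (f : M' →ₗ[S₁] M) (g : M →ₗ[S₁] M'')
    (hf : Function.Injective f) (hg : Function.Surjective g)
    (hfg : Function.Exact f g)
    (Fil' : Submodule S₁ M') (Fil : Submodule S₁ M) (Fil'' : Submodule S₁ M'')
    (hstrict₁ : Fil' = Fil.comap f) (hstrict₂ : Fil.map g = Fil'')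
    (s : S₁)
    (h1 : FiniteDimensional k
      ↥((Submodule.map (LinearMap.lsmul S₁ M' s) ⊤).map Fil'.mkQ))
    (h2 : FiniteDimensional k
      ↥((Submodule.map (LinearMap.lsmul S₁ M s) ⊤).map Fil.mkQ))
    (h3 : FiniteDimensional k
      ↥((Submodule.map (LinearMap.lsmul S₁ M'' s) ⊤).map Fil''.mkQ)) :
    -- the first induced map is injective on `s·N'/(s·N' ∩ Fil N')`
    Set.InjOn (Submodule.mapQ Fil' Fil f (le_of_eq hstrict₁))
      (((Submodule.map (LinearMap.lsmul S₁ M' s) ⊤).map Fil'.mkQ : Submodule S₁ (M' ⧸ Fil'))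
        : Set (M' ⧸ Fil')) ∧
    -- the second induced map is surjective onto `s·N''/(s·N'' ∩ Fil N'')`
    ((Submodule.map (LinearMap.lsmul S₁ M'' s) ⊤).map Fil''.mkQ ≤
      ((Submodule.map (LinearMap.lsmul S₁ M s) ⊤).map Fil.mkQ).map
        (Submodule.mapQ Fil Fil'' g (Submodule.map_le_iff_le_comap.mp (le_of_eq hstrict₂)))) ∧
    -- dimension inequality
    Module.finrank k ↥((Submodule.map (LinearMap.lsmul S₁ M' s) ⊤).map Fil'.mkQ) +
      Module.finrank k ↥((Submodule.map (LinearMap.lsmul S₁ M'' s) ⊤).map Fil''.mkQ) ≤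
    Module.finrank k ↥((Submodule.map (LinearMap.lsmul S₁ M s) ⊤).map Fil.mkQ) := by
  set A' := (Submodule.map (LinearMap.lsmul S₁ M' s) ⊤).map Fil'.mkQ with hA'
  set A := (Submodule.map (LinearMap.lsmul S₁ M s) ⊤).map Fil.mkQ with hA
  set A'' := (Submodule.map (LinearMap.lsmul S₁ M'' s) ⊤).map Fil''.mkQ with hA''
  set φ := Submodule.mapQ Fil' Fil f (le_of_eq hstrict₁) with hφ
  set ψ := Submodule.mapQ Fil Fil'' g
      (Submodule.map_le_iff_le_comap.mp (le_of_eq hstrict₂)) with hψ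
  -- φ is globally injective
  have hφinj : Function.Injective φ := by
    rw [← LinearMap.ker_eq_bot]
    rw [Submodule.eq_bot_iff]
    intro x hx
    obtain ⟨m, rfl⟩ := Fil'.mkQ_surjective x
    simp only [LinearMap.mem_ker, hφ, Submodule.mkQ_apply, Submodule.mapQ_apply,
      Submodule.Quotient.mk_eq_zero] at hx ⊢
    rw [hstrict₁]; exact hx
  -- surjectivity part
  have hsurj : A'' ≤ A.map ψ := by
    rintro y hy
    rw [hA''] at hy
    obtain ⟨z, hz, rfl⟩ := hy
    obtain ⟨m'', -, rfl⟩ := hz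
    obtain ⟨m, rfl⟩ := hg m''
    refine ⟨Fil.mkQ (s • m), ⟨s • m, ⟨m, trivial, rfl⟩, rfl⟩, ?_⟩
    simp [hψ]
  refine ⟨hφinj.injOn, hsurj, ?_⟩
  -- dimension count
  have hψφ : ∀ x : M' ⧸ Fil', ψ (φ x) = 0 := by
    intro x
    obtain ⟨m, rfl⟩ := Fil'.mkQ_surjective x
    simp only [hφ, hψ, Submodule.mkQ_apply, Submodule.mapQ_apply,
      Submodule.Quotient.mk_eq_zero]
    rw [hfg.apply_apply_eq_zero m]
    exact Fil''.zero_mem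
  have hφA' : ∀ x : M' ⧸ Fil', x ∈ A' → φ x ∈ A := by
    intro x hx
    obtain ⟨z, hz, rfl⟩ := hx
    obtain ⟨m', -, rfl⟩ := hz
    refine ⟨s • f m', ⟨f m', trivial, rfl⟩, ?_⟩
    simp [hφ, map_smul]
  -- k-linear maps
  letI : FiniteDimensional k ↥A := h2
  let ρ : ↥A →ₗ[k] (M'' ⧸ Fil'') := (ψ.restrictScalars k).comp (A.subtype.restrictScalars k)
  have hrank := LinearMap.finrank_range_add_finrank_ker ρ
  -- A'' embeds into range ρ
  have h''le : ∀ x : M'' ⧸ Fil'', x ∈ A'' → x ∈ LinearMap.range ρ := by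
    intro x hx
    obtain ⟨y, hy, rfl⟩ := hsurj hx
    exact ⟨⟨y, hy⟩, rfl⟩
  let e'' : ↥A'' →ₗ[k] ↥(LinearMap.range ρ) :=
    LinearMap.codRestrict _ (A''.subtype.restrictScalars k) (fun c => h''le _ c.2)
  have he''inj : Function.Injective e'' := by
    intro a b hab
    have h1 : ((e'' a : M'' ⧸ Fil'')) = ((e'' b : M'' ⧸ Fil'')) := congrArg Subtype.val hab
    exact Subtype.ext h1
  -- A' embeds into ker ρ
  let τ : ↥A' →ₗ[k] ↥A :=
    { toFun := fun x => ⟨φ x.1, hφA' x.1 x.2⟩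
      map_add' := fun a b => Subtype.ext (map_add φ _ _)
      map_smul' := fun c a => Subtype.ext <| by
        show φ (c • a.1) = c • φ a.1
        rw [← algebraMap_smul S₁ c (a.1 : M' ⧸ Fil'), map_smul, algebraMap_smul] }
  have hτker : ∀ x : ↥A', τ x ∈ LinearMap.ker ρ := by
    intro x
    simp only [LinearMap.mem_ker, ρ, LinearMap.comp_apply, LinearMap.restrictScalars_apply,
      Submodule.subtype_apply]
    exact hψφ x.1
  let e' : ↥A' →ₗ[k] ↥(LinearMap.ker ρ) := LinearMap.codRestrict _ τ hτker
  have he'inj : Function.Injective e' := by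
    intro a b hab
    have h1 : (τ a).1 = (τ b).1 := congrArg Subtype.val (congrArg Subtype.val hab)
    exact Subtype.ext (hφinj h1)
  have i1 : Module.finrank k ↥A' ≤ Module.finrank k ↥(LinearMap.ker ρ) :=
    LinearMap.finrank_le_finrank_of_injective he'inj
  have i2 : Module.finrank k ↥A'' ≤ Module.finrank k ↥(LinearMap.range ρ) :=
    LinearMap.finrank_le_finrank_of_injective he''inj
  omega
end

section
/- Let k be a field of characteristic p, e ≥ 1 and consider S̃₁ = k[u]/(u^{ep}) with the semilinear Frobenius and assume 2e < p. Let M̃ be free of rank 2 over S̃₁ with basis (e₁, e₂), with Fil² M̃ generated by m = α u^{e+j} e₁ + e₂ and u^{2e} e₁ for units α, and φ₂ a semilinear map with φ₂(α u^{e+j} e₁ + e₂) = μ e₁, φ₂(u^{2e} e₁) = ρ e₂, where μ, ρ are units, and 0 ≤ j < e. Then the equation ρ X (−φ(α) + φ(X) u^{p((p+1)(e−j)−2e)}) = μ has a unique solution X ∈ S̃₁, and this solution is a unit (its constant coefficient equals that of −μ/(ρ φ(α))). -/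
/-- The ring `S̃₁ = k[u]/(u^N)`. -/
def TildeS (k : Type*) [CommRing k] (N : ℕ) : Type _ :=
  Polynomial k ⧸ Ideal.span {(Polynomial.X : Polynomial k) ^ N}

noncomputable instance (k : Type*) [CommRing k] (N : ℕ) : CommRing (TildeS k N) :=
  inferInstanceAs (CommRing (Polynomial k ⧸ Ideal.span {(Polynomial.X : Polynomial k) ^ N}))

/-- The image of the variable `u` in `k[u]/(u^N)`. -/
noncomputable def TildeS.u (k : Type*) [CommRing k] (N : ℕ) : TildeS k N :=
  Ideal.Quotient.mk _ Polynomial.X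

/-- The semilinear Frobenius `φ` on `k[u]/(u^N)`: the `p`-th power Frobenius on `k` and
`u ↦ u^p`. -/
noncomputable def TildeS.phi (k : Type*) [Field k] (p : ℕ) [Fact p.Prime] [CharP k p]
    (N : ℕ) : TildeS k N →+* TildeS k N :=
  Ideal.Quotient.lift _
    (Polynomial.eval₂RingHom
      ((Ideal.Quotient.mk (Ideal.span {(Polynomial.X : Polynomial k) ^ N})).comp
        ((Polynomial.C : k →+* Polynomial k).comp (frobenius k p)))
      ((TildeS.u k N) ^ p))
    (by
      intro a ha
      rw [Ideal.mem_span_singleton] at ha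
      obtain ⟨c, rfl⟩ := ha
      rw [map_mul, map_pow]
      erw [Polynomial.coe_eval₂RingHom, Polynomial.eval₂_X]
      have : ((TildeS.u k N) ^ p) ^ N = 0 := by
        have hmem : (Polynomial.X : Polynomial k) ^ (p * N) ∈
            Ideal.span {(Polynomial.X : Polynomial k) ^ N} := by
          rw [Ideal.mem_span_singleton]
          exact pow_dvd_pow _ (Nat.le_mul_of_pos_left N (Fact.out : p.Prime).pos)
        have h0 : (Ideal.Quotient.mk (Ideal.span {(Polynomial.X : Polynomial k) ^ N}))
            ((Polynomial.X : Polynomial k) ^ (p * N)) = 0 :=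
          Ideal.Quotient.eq_zero_iff_mem.mpr hmem
        rw [map_pow] at h0
        rw [← pow_mul, TildeS.u]
        exact h0
      rw [this, zero_mul])

/-- (Prop. of §4, case analysis) For `S̃₁ = k[u]/(u^{ep})` with `2e < p`, `0 ≤ j < e` and
units `α, μ, ρ`, the equation `ρ X (−φ(α) + φ(X) u^{p((p+1)(e−j)−2e)}) = μ` has a unique
solution `X ∈ S̃₁`, and this solution is a unit. -/
theorem stmt16 (k : Type*) [Field k] (p : ℕ) [Fact p.Prime] [CharP k p]
    (e j : ℕ) (he : 1 ≤ e) (hp : 2 * e < p) (hj : j < e)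
    (α μ ρ : TildeS k (e * p)) (hα : IsUnit α) (hμ : IsUnit μ) (hρ : IsUnit ρ) :
    (∃! X : TildeS k (e * p),
      ρ * X * (-(TildeS.phi k p (e * p) α) +
        (TildeS.phi k p (e * p) X) * (TildeS.u k (e * p)) ^ (p * ((p + 1) * (e - j) - 2 * e)))
        = μ) ∧
    (∀ X : TildeS k (e * p),
      ρ * X * (-(TildeS.phi k p (e * p) α) +
        (TildeS.phi k p (e * p) X) * (TildeS.u k (e * p)) ^ (p * ((p + 1) * (e - j) - 2 * e)))
        = μ → IsUnit X) := by
  have hp1 : 1 ≤ p := (Fact.out : p.Prime).one_lt.le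
  set φ := TildeS.phi k p (e * p) with hφdef
  set u := TildeS.u k (e * p) with hudef
  set M := p * ((p + 1) * (e - j) - 2 * e) with hMdef
  have hM : 1 ≤ M := by
    have h1 : p + 1 ≤ (p + 1) * (e - j) := Nat.le_mul_of_pos_right _ (by omega)
    have : 1 ≤ (p + 1) * (e - j) - 2 * e := by omega
    calc 1 = 1 * 1 := by ring
    _ ≤ M := Nat.mul_le_mul hp1 this
  -- u ^ (e*p) = 0
  have hu0 : u ^ (e * p) = 0 := by
    have h0 : (Ideal.Quotient.mk (Ideal.span {(Polynomial.X : Polynomial k) ^ (e * p)}))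
        ((Polynomial.X : Polynomial k) ^ (e * p)) = 0 :=
      Ideal.Quotient.eq_zero_iff_mem.mpr (Ideal.mem_span_singleton_self _)
    rw [map_pow] at h0
    exact h0
  -- φ u = u ^ p
  have hφu : φ u = u ^ p :=
    Polynomial.eval₂_X
      ((Ideal.Quotient.mk (Ideal.span {(Polynomial.X : Polynomial k) ^ (e * p)})).comp
        ((Polynomial.C : k →+* Polynomial k).comp (frobenius k p)))
      ((TildeS.u k (e * p)) ^ p)
  -- divisibility is preserved by φ
  have hdvd : ∀ (n : ℕ) (a : TildeS k (e * p)), u ^ n ∣ a → u ^ n ∣ φ a := by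
    rintro n a ⟨c, rfl⟩
    rw [map_mul, map_pow, hφu, ← pow_mul]
    exact dvd_mul_of_dvd_left (pow_dvd_pow u (Nat.le_mul_of_pos_left n (by omega))) _
  have htnil : IsNilpotent (u ^ M : TildeS k (e * p)) :=
    ⟨e * p, by rw [← pow_mul, mul_comm M, pow_mul, hu0, zero_pow (by omega)]⟩
  have hφα : IsUnit (φ α) := hα.map φ
  -- the key step lemma
  have key : ∀ (n : ℕ) (A B X Y : TildeS k (e * p)),
      ρ * A * (-(φ α) + φ X * u ^ M) = μ →
      ρ * B * (-(φ α) + φ Y * u ^ M) = μ →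
      u ^ n ∣ X - Y → u ^ (n + 1) ∣ A - B := by
    intro n A B X Y hA hB hXY
    have heq : (ρ * φ α - ρ * u ^ M * φ X) * (A - B) = ρ * u ^ M * B * (φ X - φ Y) := by
      linear_combination hB - hA
    rw [← map_sub] at heq
    have hcunit : IsUnit (ρ * φ α - ρ * u ^ M * φ X) := by
      rw [sub_eq_add_neg]
      refine IsNilpotent.isUnit_add_left_of_commute ?_ (hρ.mul hφα) (Commute.all _ _)
      have hrw : ρ * u ^ M * φ X = ρ * φ X * u ^ M := by ring
      rw [hrw]
      exact ((Commute.all _ _).isNilpotent_mul_left htnil).neg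
    have hrhs : u ^ (n + 1) ∣ ρ * u ^ M * B * φ (X - Y) := by
      calc u ^ (n + 1) ∣ u ^ (M + n) := pow_dvd_pow u (by omega)
        _ = u ^ M * u ^ n := pow_add u M n
        _ ∣ u ^ M * φ (X - Y) := mul_dvd_mul_left _ (hdvd n _ hXY)
        _ ∣ ρ * u ^ M * B * φ (X - Y) := ⟨ρ * B, by ring⟩
    obtain ⟨v, hv⟩ := hcunit
    have : A - B = ↑v⁻¹ * ((ρ * φ α - ρ * u ^ M * φ X) * (A - B)) := by
      rw [← hv, Units.inv_mul_cancel_left]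
    rw [this, heq]
    exact (hrhs).mul_left _
  -- uniqueness
  have huniq : ∀ X Y : TildeS k (e * p),
      ρ * X * (-(φ α) + φ X * u ^ M) = μ →
      ρ * Y * (-(φ α) + φ Y * u ^ M) = μ → X = Y := by
    intro X Y hX hY
    have hall : ∀ n : ℕ, u ^ n ∣ X - Y := by
      intro n
      induction n with
      | zero => simpa using one_dvd _
      | succ m ih => exact key m X Y X Y hX hY ih
    have := hall (e * p)
    rw [hu0, zero_dvd_iff, sub_eq_zero] at this
    exact this
  -- unit of the coefficient for any Z
  have hBunit : ∀ Z : TildeS k (e * p), IsUnit (ρ * (-(φ α) + φ Z * u ^ M)) := by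
    intro Z
    refine hρ.mul ?_
    refine IsNilpotent.isUnit_add_left_of_commute ?_ hφα.neg (Commute.all _ _)
    exact (Commute.all _ _).isNilpotent_mul_left htnil
  -- the approximating sequence
  set seq : ℕ → TildeS k (e * p) := fun n =>
    Nat.rec 0 (fun _ Xn => Ring.inverse (ρ * (-(φ α) + φ Xn * u ^ M)) * μ) n with hseqdef
  have hseq : ∀ n, ρ * seq (n + 1) * (-(φ α) + φ (seq n) * u ^ M) = μ := by
    intro n
    have hc := Ring.inverse_mul_cancel _ (hBunit (seq n))
    show ρ * (Ring.inverse (ρ * (-(φ α) + φ (seq n) * u ^ M)) * μ) *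
      (-(φ α) + φ (seq n) * u ^ M) = μ
    linear_combination μ * hc
  have hd : ∀ n, u ^ n ∣ seq (n + 1) - seq n := by
    intro n
    induction n with
    | zero => simpa using one_dvd _
    | succ m ih =>
        exact key m (seq (m + 2)) (seq (m + 1)) (seq (m + 1)) (seq m)
          (hseq (m + 1)) (hseq m) ih
  have hfix : seq (e * p + 1) = seq (e * p) := by
    have := hd (e * p)
    rwa [hu0, zero_dvd_iff, sub_eq_zero] at this
  have hX : ρ * seq (e * p + 1) * (-(φ α) + φ (seq (e * p + 1)) * u ^ M) = μ := by
    have h := hseq (e * p)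
    rw [← hfix] at h
    exact h
  refine ⟨⟨seq (e * p + 1), hX, fun Y hY => huniq Y (seq (e * p + 1)) hY hX⟩, ?_⟩
  intro Z hZ
  have h2 : IsUnit (Z * (ρ * (-(φ α) + φ Z * u ^ M))) := by
    rw [show Z * (ρ * (-(φ α) + φ Z * u ^ M)) = ρ * Z * (-(φ α) + φ Z * u ^ M) from by ring,
      hZ]
    exact hμ
  exact isUnit_of_mul_isUnit_left h2
end
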